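/- arXiv:2512.07728 — 2 statements merged into one kernel-verified Lean document; each statement's English description precedes it below -/
import Mathlib

section
/- Let π = (p_1,…,p_n) be a polygonal curve and s the segment from p_1 to p_n parametrised as s(t) = p_1 + t(p_n − p_1), t ∈ [0,1]. For each k let t_k ∈ [0,1] minimise d(p_k, s(t)). Define the matching that sends p_k to s(max_{k' ≤ k} t_{k'}). Then the Fréchet distance realised by this matching is at most 2 · D_F(π, s); i.e., max_k d(p_k, s(max_{k'≤k} t_{k'})) ≤ 2 · D_F(π, s). -/
/-- A traversal of a pair of curves: a pair of continuous, monotone maps on `[0,1]`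
with prescribed endpoints `α 0 = a`, `α 1 = b`, `β 0 = c`, `β 1 = e`. -/
structure Traversal (a b c e : ℝ) where
  α : ℝ → ℝ
  β : ℝ → ℝ
  contα : ContinuousOn α (Set.Icc 0 1)
  monoα : MonotoneOn α (Set.Icc 0 1)
  α0 : α 0 = a
  α1 : α 1 = b
  contβ : ContinuousOn β (Set.Icc 0 1)
  monoβ : MonotoneOn β (Set.Icc 0 1)
  β0 : β 0 = c
  β1 : β 1 = e

/-- The continuous Fréchet distance between curves `f : [a,b] → ℝ^d` and `g : [c,e] → ℝ^d`. -/
noncomputable def frechet {d : ℕ} (a b c e : ℝ) (f g : ℝ → EuclideanSpace ℝ (Fin d)) : ℝ :=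
  sInf {r | ∃ T : Traversal a b c e, ∀ t ∈ Set.Icc (0:ℝ) 1,
    dist (f (T.α t)) (g (T.β t)) ≤ r}

/-- The polygonal curve through the points `p 0, …, p n`, parametrised over `[0, n]`
by linear interpolation. -/
noncomputable def interp {d n : ℕ} (p : Fin (n+1) → EuclideanSpace ℝ (Fin d)) (t : ℝ) :
    EuclideanSpace ℝ (Fin d) :=
  (1 - Int.fract t) • p ⟨min ⌊t⌋.toNat n, Nat.lt_succ_of_le (min_le_right _ _)⟩
    + Int.fract t • p ⟨min (⌊t⌋.toNat + 1) n, Nat.lt_succ_of_le (min_le_right _ _)⟩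


open RealInnerProductSpace

variable {E : Type*} [NormedAddCommGroup E] [InnerProductSpace ℝ E]

lemma expand_smul (a v : E) (r : ℝ) :
    ‖a - r•v‖^2 = ‖a‖^2 - 2*(r*⟪a,v⟫) + r^2*‖v‖^2 := by
  rw [norm_sub_sq_real, real_inner_smul_right, norm_smul]
  simp only [Real.norm_eq_abs, mul_pow, sq_abs]
  try ring

lemma aux_nonpos (δ L γ : ℝ) (hδ : 0 < δ) (hL : 0 ≤ L)
    (h : ∀ ε, 0 < ε → ε ≤ δ → 2*ε*γ ≤ ε^2*L) : γ ≤ 0 := by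
  by_contra hγ
  push_neg at hγ
  have hε : 0 < min δ (γ/(L+1)) := lt_min hδ (by positivity)
  have h2 := h _ hε (min_le_left _ _)
  have h3 : min δ (γ/(L+1)) ≤ γ/(L+1) := min_le_right _ _
  have h5 : (γ/(L+1)) * L ≤ γ := by
    rw [div_mul_eq_mul_div, div_le_iff₀ (by linarith)]; nlinarith
  have h4 : min δ (γ/(L+1)) * L ≤ γ :=
    le_trans (mul_le_mul_of_nonneg_right h3 hL) h5
  nlinarith

lemma star_ineq (x p0 v : E) (tk : ℝ)
    (hmin : ∀ u ∈ Set.Icc (0:ℝ) 1, ‖x - (p0 + tk•v)‖ ≤ ‖x - (p0 + u•v)‖)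
    (u : ℝ) (hu : u ∈ Set.Icc (0:ℝ) 1) :
    2*(u - tk) * ⟪x - (p0 + tk•v), v⟫ ≤ (u - tk)^2 * ‖v‖^2 := by
  have h1 := hmin u hu
  have h2 : ‖x - (p0 + tk•v)‖^2 ≤ ‖x - (p0 + u•v)‖^2 :=
    pow_le_pow_left₀ (norm_nonneg _) h1 2
  have h3 : x - (p0 + u•v) = (x - (p0 + tk•v)) - (u - tk)•v := by module
  rw [h3] at h2
  have e := expand_smul (x - (p0 + tk•v)) v (u - tk)
  linarith

lemma vi (x p0 v : E) (tk : ℝ) (htk : tk ∈ Set.Icc (0:ℝ) 1)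
    (hmin : ∀ u ∈ Set.Icc (0:ℝ) 1, ‖x - (p0 + tk•v)‖ ≤ ‖x - (p0 + u•v)‖)
    (u : ℝ) (hu : u ∈ Set.Icc (0:ℝ) 1) :
    (u - tk) * ⟪x - (p0 + tk•v), v⟫ ≤ 0 := by
  rcases lt_trichotomy u tk with h | h | h
  · have hc0 : -⟪x - (p0 + tk•v), v⟫ ≤ 0 := by
      apply aux_nonpos (tk - u) (‖v‖^2) _ (by linarith) (by positivity)
      intro ε hε1 hε2
      have hst := star_ineq x p0 v tk hmin (tk - ε)
        ⟨by linarith [hu.1], by linarith [htk.2]⟩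
      rw [show tk - ε - tk = -ε by ring] at hst
      nlinarith
    nlinarith
  · simp [h]
  · have hc0 : ⟪x - (p0 + tk•v), v⟫ ≤ 0 := by
      apply aux_nonpos (u - tk) (‖v‖^2) _ (by linarith) (by positivity)
      intro ε hε1 hε2
      have hst := star_ineq x p0 v tk hmin (tk + ε)
        ⟨by linarith [htk.1], by linarith [hu.2]⟩
      rw [show tk + ε - tk = ε by ring] at hst
      nlinarith
    nlinarith

lemma projB (x p0 v : E) (tk : ℝ) (htk : tk ∈ Set.Icc (0:ℝ) 1)
    (hmin : ∀ u ∈ Set.Icc (0:ℝ) 1, ‖x - (p0 + tk•v)‖ ≤ ‖x - (p0 + u•v)‖)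
    (u : ℝ) (hu : u ∈ Set.Icc (0:ℝ) 1) :
    ‖(p0 + tk•v) - (p0 + u•v)‖ ≤ ‖x - (p0 + u•v)‖ := by
  have hvi := vi x p0 v tk htk hmin u hu
  have h3 : x - (p0 + u•v) = (x - (p0 + tk•v)) - (u - tk)•v := by module
  have h4 : (p0 + tk•v) - (p0 + u•v) = ((tk - u))•v := by module
  rw [h3, h4]
  have e := expand_smul (x - (p0 + tk•v)) v (u - tk)
  have hn : ‖(tk - u)•v‖^2 = (u - tk)^2*‖v‖^2 := by
    rw [norm_smul]
    simp only [Real.norm_eq_abs, mul_pow, sq_abs]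
    ring
  have h6 : ‖(tk - u)•v‖^2 ≤ ‖(x - (p0 + tk•v)) - (u - tk)•v‖^2 := by
    rw [hn, e]; nlinarith [sq_nonneg ‖x - (p0 + tk•v)‖]
  exact (pow_le_pow_iff_left₀ (norm_nonneg _) (norm_nonneg _) two_ne_zero).mp h6

lemma quasiC (x p0 v : E) (tk M b : ℝ) (htk : tk ∈ Set.Icc (0:ℝ) 1)
    (hb : b ∈ Set.Icc (0:ℝ) 1)
    (hmin : ∀ u ∈ Set.Icc (0:ℝ) 1, ‖x - (p0 + tk•v)‖ ≤ ‖x - (p0 + u•v)‖)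
    (h1 : tk ≤ M) (h2 : M ≤ b) :
    ‖x - (p0 + M•v)‖ ≤ ‖x - (p0 + b•v)‖ := by
  have hvi := vi x p0 v tk htk hmin b hb
  have e1 : x - (p0 + M•v) = (x - (p0 + tk•v)) - (M - tk)•v := by module
  have e2 : x - (p0 + b•v) = (x - (p0 + tk•v)) - (b - tk)•v := by module
  have eM := expand_smul (x - (p0 + tk•v)) v (M - tk)
  have eb := expand_smul (x - (p0 + tk•v)) v (b - tk)
  have hcM : (b - M) * ⟪x - (p0 + tk•v), v⟫ ≤ 0 := by
    rcases le_or_gt (⟪x - (p0 + tk•v), v⟫) 0 with h | h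
    · nlinarith
    · nlinarith
  have h6 : ‖(x - (p0 + tk•v)) - (M - tk)•v‖^2 ≤ ‖(x - (p0 + tk•v)) - (b - tk)•v‖^2 := by
    have key : 0 ≤ (b - M) * (b + M - 2*tk) * ‖v‖^2 :=
      mul_nonneg (mul_nonneg (by linarith) (by linarith)) (sq_nonneg _)
    rw [eM, eb]; nlinarith [hcM, key]
  rw [e1, e2]
  exact (pow_le_pow_iff_left₀ (norm_nonneg _) (norm_nonneg _) two_ne_zero).mp h6

lemma interp_nat {d n : ℕ} (p : Fin (n+1) → EuclideanSpace ℝ (Fin d)) (k : Fin (n+1)) :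
    interp p ((k.val : ℕ) : ℝ) = p k := by
  have h1 : Int.fract ((k.val:ℕ):ℝ) = 0 := Int.fract_natCast _
  have h2 : ⌊((k.val:ℕ):ℝ)⌋ = (k.val:ℤ) := Int.floor_natCast _
  rw [interp, h1]
  simp only [h2, Int.toNat_natCast, sub_zero, one_smul, zero_smul, add_zero]
  exact congrArg p (Fin.ext (Nat.min_eq_left (Nat.lt_succ_iff.mp k.isLt)))

lemma S_nonempty {d n : ℕ} (p : Fin (n+1) → EuclideanSpace ℝ (Fin d))
    (v : EuclideanSpace ℝ (Fin d)) :
    ∃ r, ∃ T : Traversal 0 (n:ℝ) 0 1, ∀ u ∈ Set.Icc (0:ℝ) 1,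
      dist (interp p (T.α u)) (p 0 + T.β u • v) ≤ r := by
  classical
  set R := Finset.univ.sup' Finset.univ_nonempty (fun k : Fin (n+1) => ‖p k‖) with hR
  have hRk : ∀ k, ‖p k‖ ≤ R :=
    fun k => Finset.le_sup' (fun k : Fin (n+1) => ‖p k‖) (Finset.mem_univ k)
  have hR0 : 0 ≤ R := le_trans (norm_nonneg _) (hRk 0)
  have comb : ∀ (f : ℝ) (a b : EuclideanSpace ℝ (Fin d)), 0 ≤ f → f ≤ 1 →
      ‖a‖ ≤ R → ‖b‖ ≤ R → ‖(1-f)•a + f•b‖ ≤ R := by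
    intro f a b h0 h1 ha hb
    calc ‖(1-f)•a + f•b‖ ≤ ‖(1-f)•a‖ + ‖f•b‖ := norm_add_le _ _
      _ = (1-f)*‖a‖ + f*‖b‖ := by
          rw [norm_smul, norm_smul, Real.norm_eq_abs, abs_of_nonneg (by linarith),
            Real.norm_eq_abs, abs_of_nonneg h0]
      _ ≤ (1-f)*R + f*R := by
          have := norm_nonneg a; have := norm_nonneg b; nlinarith
      _ = R := by ring
  have hint : ∀ x : ℝ, ‖interp p x‖ ≤ R := by
    intro x
    rw [interp]
    exact comb _ _ _ (Int.fract_nonneg x) (le_of_lt (Int.fract_lt_one x)) (hRk _) (hRk _)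
  have hseg : ∀ u ∈ Set.Icc (0:ℝ) 1, ‖p 0 + u • v‖ ≤ R + ‖v‖ := by
    intro u hu
    calc ‖p 0 + u•v‖ ≤ ‖p 0‖ + ‖u•v‖ := norm_add_le _ _
      _ ≤ R + ‖v‖ := by
          refine add_le_add (hRk 0) ?_
          rw [norm_smul, Real.norm_eq_abs]
          have h : |u| ≤ 1 := abs_le.mpr ⟨by linarith [hu.1], hu.2⟩
          nlinarith [norm_nonneg v]
  refine ⟨R + (R + ‖v‖), ⟨fun u => (n:ℝ)*u, id,
    (continuous_const.mul continuous_id).continuousOn,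
    fun a _ b _ hab => mul_le_mul_of_nonneg_left hab (Nat.cast_nonneg n),
    mul_zero _, mul_one _, continuous_id.continuousOn, monotone_id.monotoneOn _,
    rfl, rfl⟩, ?_⟩
  intro u hu
  calc dist (interp p ((n:ℝ)*u)) (p 0 + u • v)
      ≤ ‖interp p ((n:ℝ)*u)‖ + ‖p 0 + u•v‖ := by rw [dist_eq_norm]; exact norm_sub_le _ _
    _ ≤ R + (R + ‖v‖) := add_le_add (hint _) (hseg u hu)

/-- the greedy monotone matching, matching `p k` to the point of
the segment at parameter `max_{k' ≤ k} t k'` (running maximum of the nearest-point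
projection parameters), realises a distance at most twice the Fréchet distance
between the curve and the segment. -/
theorem greedy_matching_two_approx {d n : ℕ}
    (p : Fin (n+1) → EuclideanSpace ℝ (Fin d))
    (t : Fin (n+1) → ℝ)
    (hrange : ∀ k, t k ∈ Set.Icc (0:ℝ) 1)
    (hproj : ∀ k, ∀ u ∈ Set.Icc (0:ℝ) 1,
      dist (p k) (p 0 + t k • (p (Fin.last n) - p 0)) ≤
        dist (p k) (p 0 + u • (p (Fin.last n) - p 0))) :
    ∀ k : Fin (n+1),
      dist (p k) (p 0 + ((Finset.Iic k).sup' Finset.nonempty_Iic t) • (p (Fin.last n) - p 0))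
        ≤ 2 * frechet 0 (n : ℝ) 0 1 (interp p)
            (fun u : ℝ => p 0 + u • (p (Fin.last n) - p 0)) := by
  intro k
  set v := p (Fin.last n) - p 0 with hv
  obtain ⟨k0, hk0mem, hMeq⟩ := Finset.exists_mem_eq_sup' (Finset.nonempty_Iic (a := k)) t
  set M := (Finset.Iic k).sup' Finset.nonempty_Iic t with hM
  have hk0k : k0.val ≤ k.val := Fin.le_def.mp (Finset.mem_Iic.mp hk0mem)
  have htkM : t k ≤ M := Finset.le_sup' t (Finset.mem_Iic.mpr le_rfl)
  -- the minimality hypotheses in norm form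
  have hmin : ∀ k' : Fin (n+1), ∀ u ∈ Set.Icc (0:ℝ) 1,
      ‖p k' - (p 0 + t k' • v)‖ ≤ ‖p k' - (p 0 + u • v)‖ := by
    intro k' u hu
    have := hproj k' u hu
    rwa [dist_eq_norm, dist_eq_norm] at this
  have distseg : ∀ a b : ℝ, dist (p 0 + a•v) (p 0 + b•v) = |a - b| * ‖v‖ := by
    intro a b
    rw [dist_eq_norm]
    have h : (p 0 + a•v) - (p 0 + b•v) = (a - b)•v := by module
    rw [h, norm_smul, Real.norm_eq_abs]
  -- reduce to showing the bound for every r in the defining set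
  have key : ∀ r, (∃ T : Traversal 0 (n:ℝ) 0 1, ∀ u ∈ Set.Icc (0:ℝ) 1,
      dist (interp p (T.α u)) (p 0 + T.β u • v) ≤ r) →
      dist (p k) (p 0 + M • v) ≤ 2 * r := by
    intro r ⟨T, hT⟩
    -- find ts with α ts = k
    have hsub1 := intermediate_value_Icc (zero_le_one (α := ℝ)) T.contα
    rw [T.α0, T.α1] at hsub1
    obtain ⟨ts, hts, hαts⟩ := hsub1 ⟨Nat.cast_nonneg k.val,
      Nat.cast_le.mpr (Nat.lt_succ_iff.mp k.isLt)⟩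
    -- find t0 ≤ ts with α t0 = k0
    have hsub2 := intermediate_value_Icc hts.1 (T.contα.mono (Set.Icc_subset_Icc le_rfl hts.2))
    rw [T.α0, hαts] at hsub2
    obtain ⟨t0, ht0, hαt0⟩ := hsub2 ⟨Nat.cast_nonneg k0.val, Nat.cast_le.mpr hk0k⟩
    have ht0' : t0 ∈ Set.Icc (0:ℝ) 1 := ⟨ht0.1, le_trans ht0.2 hts.2⟩
    -- β stays in [0,1]
    have hβ : ∀ u ∈ Set.Icc (0:ℝ) 1, T.β u ∈ Set.Icc (0:ℝ) 1 := by
      intro u hu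
      constructor
      · have := T.monoβ (Set.left_mem_Icc.mpr zero_le_one) hu hu.1
        rwa [T.β0] at this
      · have := T.monoβ hu (Set.right_mem_Icc.mpr zero_le_one) hu.2
        rwa [T.β1] at this
    have hββ : T.β t0 ≤ T.β ts := T.monoβ ht0' hts ht0.2
    have h1 : dist (p k) (p 0 + T.β ts • v) ≤ r := by
      have h := hT ts hts
      rwa [hαts, interp_nat] at h
    have h2 : dist (p k0) (p 0 + T.β t0 • v) ≤ r := by
      have h := hT t0 ht0'
      rwa [hαt0, interp_nat] at h
    have hr0 : 0 ≤ r := le_trans dist_nonneg h1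
    by_cases hcase : M ≤ T.β ts
    · calc dist (p k) (p 0 + M • v) = ‖p k - (p 0 + M • v)‖ := dist_eq_norm _ _
        _ ≤ ‖p k - (p 0 + T.β ts • v)‖ :=
            quasiC (p k) (p 0) v (t k) M (T.β ts) (hrange k) (hβ ts hts) (hmin k) htkM hcase
        _ = dist (p k) (p 0 + T.β ts • v) := (dist_eq_norm _ _).symm
        _ ≤ r := h1
        _ ≤ 2 * r := by linarith
    · push_neg at hcase
      have h7 : dist (p 0 + T.β ts • v) (p 0 + M • v)
          ≤ dist (p 0 + T.β t0 • v) (p 0 + M • v) := by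
        rw [distseg, distseg, abs_of_nonpos (by linarith), abs_of_nonpos (by linarith)]
        have := norm_nonneg v
        nlinarith
      have h8 : dist (p 0 + T.β t0 • v) (p 0 + M • v) ≤ r := by
        rw [hMeq]
        have hp := projB (p k0) (p 0) v (t k0) (hrange k0) (hmin k0) (T.β t0) (hβ t0 ht0')
        calc dist (p 0 + T.β t0 • v) (p 0 + t k0 • v)
            = ‖(p 0 + t k0 • v) - (p 0 + T.β t0 • v)‖ := by
              rw [dist_comm, dist_eq_norm]
          _ ≤ ‖p k0 - (p 0 + T.β t0 • v)‖ := hp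
          _ = dist (p k0) (p 0 + T.β t0 • v) := (dist_eq_norm _ _).symm
          _ ≤ r := h2
      calc dist (p k) (p 0 + M • v)
          ≤ dist (p k) (p 0 + T.β ts • v) + dist (p 0 + T.β ts • v) (p 0 + M • v) :=
            dist_triangle _ _ _
        _ ≤ 2 * r := by linarith
  have hne : Set.Nonempty {r | ∃ T : Traversal 0 (n:ℝ) 0 1, ∀ u ∈ Set.Icc (0:ℝ) 1,
      dist (interp p (T.α u)) ((fun u : ℝ => p 0 + u • v) (T.β u)) ≤ r} := by
    obtain ⟨r, hr⟩ := S_nonempty p v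
    exact ⟨r, hr⟩
  have hle : dist (p k) (p 0 + M • v) / 2 ≤ frechet 0 (n : ℝ) 0 1 (interp p)
      (fun u : ℝ => p 0 + u • v) := by
    rw [frechet]
    exact le_csInf hne (fun r hr => by linarith [key r hr])
  linarith
end

section
/- Weighted lower bound for lossless simplification: let π, σ be curves with vertex-restricted simplifications π̄, σ̄, and let w_π̄, w_σ̄ assign to each edge of the simplifications a non-positive weight whose absolute value is at least the Fréchet distance between that edge and its corresponding subcurve of the original. Then the additively weighted Fréchet distance satisfies D_F^w(π̄, σ̄) ≤ D_F(π, σ). -/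
/-- The Fréchet distance with additive edge weights `w1`, `w2` on the two curves. -/
noncomputable def frechetW {d : ℕ} (a b c e : ℝ) (f g : ℝ → EuclideanSpace ℝ (Fin d))
    (w1 w2 : ℝ → ℝ) : ℝ :=
  sInf {r | ∃ T : Traversal a b c e, ∀ t ∈ Set.Icc (0:ℝ) 1,
    dist (f (T.α t)) (g (T.β t)) + w1 (T.α t) + w2 (T.β t) ≤ r}

set_option maxHeartbeats 1000000
open Set

lemma traversal_alpha_mem {a b c e : ℝ} (T : Traversal a b c e) (hab : a ≤ b) {t : ℝ}
    (ht : t ∈ Icc (0:ℝ) 1) : T.α t ∈ Icc a b := by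
  constructor
  · have h := T.monoα (left_mem_Icc.2 zero_le_one) ht ht.1
    rwa [T.α0] at h
  · have h := T.monoα ht (right_mem_Icc.2 zero_le_one) ht.2
    rwa [T.α1] at h

lemma traversal_beta_mem {a b c e : ℝ} (T : Traversal a b c e) (hce : c ≤ e) {t : ℝ}
    (ht : t ∈ Icc (0:ℝ) 1) : T.β t ∈ Icc c e := by
  constructor
  · have h := T.monoβ (left_mem_Icc.2 zero_le_one) ht ht.1
    rwa [T.β0] at h
  · have h := T.monoβ ht (right_mem_Icc.2 zero_le_one) ht.2
    rwa [T.β1] at h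

/-- The linear traversal. -/
noncomputable def linTraversal (a b c e : ℝ) (hab : a ≤ b) (hce : c ≤ e) : Traversal a b c e where
  α := fun t => a + t * (b - a)
  β := fun t => c + t * (e - c)
  contα := (continuousOn_const.add (continuousOn_id.mul continuousOn_const))
  monoα := fun s _ t _ hst => by
    have := mul_nonneg (sub_nonneg.2 hst) (sub_nonneg.2 hab); simp only; nlinarith
  α0 := by ring
  α1 := by ring
  contβ := (continuousOn_const.add (continuousOn_id.mul continuousOn_const))
  monoβ := fun s _ t _ hst => by
    have := mul_nonneg (sub_nonneg.2 hst) (sub_nonneg.2 hce); simp only; nlinarith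
  β0 := by ring
  β1 := by ring

lemma frechet_set_nonempty {d : ℕ} {a b c e : ℝ} (hab : a ≤ b) (hce : c ≤ e)
    {f g : ℝ → EuclideanSpace ℝ (Fin d)}
    (hf : ContinuousOn f (Icc a b)) (hg : ContinuousOn g (Icc c e)) :
    {r | ∃ T : Traversal a b c e, ∀ t ∈ Set.Icc (0:ℝ) 1,
      dist (f (T.α t)) (g (T.β t)) ≤ r}.Nonempty := by
  set T := linTraversal a b c e hab hce
  have hcont : ContinuousOn (fun t => dist (f (T.α t)) (g (T.β t))) (Icc (0:ℝ) 1) := by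
    exact continuous_dist.comp_continuousOn
      ((hf.comp T.contα (fun t ht => traversal_alpha_mem T hab ht)).prodMk
       (hg.comp T.contβ (fun t ht => traversal_beta_mem T hce ht)))
  obtain ⟨t₀, ht₀, hmax⟩ := isCompact_Icc.exists_isMaxOn (nonempty_Icc.2 zero_le_one) hcont
  exact ⟨dist (f (T.α t₀)) (g (T.β t₀)), T, fun t ht => hmax ht⟩

lemma frechet_set_nonneg {d : ℕ} {a b c e : ℝ} {f g : ℝ → EuclideanSpace ℝ (Fin d)} {r : ℝ}
    (hr : r ∈ {r | ∃ T : Traversal a b c e, ∀ t ∈ Set.Icc (0:ℝ) 1,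
      dist (f (T.α t)) (g (T.β t)) ≤ r}) : 0 ≤ r := by
  obtain ⟨T, hT⟩ := hr
  exact le_trans dist_nonneg (hT 0 (left_mem_Icc.2 zero_le_one))

lemma frechet_nonneg {d : ℕ} (a b c e : ℝ) (f g : ℝ → EuclideanSpace ℝ (Fin d)) :
    0 ≤ frechet a b c e f g :=
  Real.sInf_nonneg (fun _ hr => frechet_set_nonneg hr)

lemma exists_good_traversal {d : ℕ} {a b c e : ℝ} (hab : a ≤ b) (hce : c ≤ e)
    {f g : ℝ → EuclideanSpace ℝ (Fin d)}
    (hf : ContinuousOn f (Icc a b)) (hg : ContinuousOn g (Icc c e)) {ε : ℝ} (hε : 0 < ε) :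
    ∃ T : Traversal a b c e, ∀ t ∈ Icc (0:ℝ) 1,
      dist (f (T.α t)) (g (T.β t)) ≤ frechet a b c e f g + ε := by
  obtain ⟨r, hr, hrlt⟩ := Real.lt_sInf_add_pos (frechet_set_nonempty hab hce hf hg) hε
  obtain ⟨T, hT⟩ := hr
  exact ⟨T, fun t ht => le_trans (hT t ht) hrlt.le⟩


lemma continuousOn_union_closed {X : Type*} [TopologicalSpace X] {f : ℝ → X} {s t : Set ℝ}
    (hs : IsClosed s) (ht : IsClosed t)
    (hfs : ContinuousOn f s) (hft : ContinuousOn f t) : ContinuousOn f (s ∪ t) := by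
  intro x hx
  have h1 : ContinuousWithinAt f s x := by
    by_cases h : x ∈ s
    · exact hfs x h
    · exact continuousWithinAt_of_notMem_closure (by rwa [hs.closure_eq])
  have h2 : ContinuousWithinAt f t x := by
    by_cases h : x ∈ t
    · exact hft x h
    · exact continuousWithinAt_of_notMem_closure (by rwa [ht.closure_eq])
  exact h1.union h2

lemma interp_natCast {d n : ℕ} (p : Fin (n+1) → EuclideanSpace ℝ (Fin d)) (j : ℕ) (hj : j ≤ n) :
    interp p (j : ℝ) = p ⟨j, Nat.lt_succ_of_le hj⟩ := by
  unfold interp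
  have h1 : Int.fract ((j:ℕ) : ℝ) = 0 := Int.fract_natCast j
  have h2 : ⌊((j:ℕ) : ℝ)⌋ = (j : ℤ) := Int.floor_natCast j
  simp only [h1, h2, Int.toNat_natCast, min_eq_left hj, sub_zero, one_smul, zero_smul, add_zero]

lemma interp_eqOn_cell {d n : ℕ} (p : Fin (n+1) → EuclideanSpace ℝ (Fin d)) (j : ℕ) (hj : j < n) :
    Set.EqOn (interp p)
      (fun t => (1 - (t - j)) • p ⟨j, by omega⟩ + (t - j) • p ⟨j+1, by omega⟩)
      (Icc (j:ℝ) (j+1)) := by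
  intro t ht
  rcases eq_or_lt_of_le ht.2 with heq | hlt
  · subst heq
    have : ((j:ℝ) + 1) = ((j+1 : ℕ) : ℝ) := by push_cast; ring
    rw [this, interp_natCast p (j+1) (by omega)]
    simp
  · have hfl : ⌊t⌋ = (j : ℤ) := by
      rw [Int.floor_eq_iff]
      refine ⟨by exact_mod_cast ht.1, by push_cast; exact hlt⟩
    have hfr : Int.fract t = t - j := by
      rw [Int.fract, hfl]; push_cast; ring
    unfold interp
    simp only [hfl, hfr, Int.toNat_natCast, min_eq_left (by omega : j ≤ n),
      min_eq_left (by omega : j + 1 ≤ n)]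

lemma interp_continuousOn_aux {d n : ℕ} (p : Fin (n+1) → EuclideanSpace ℝ (Fin d)) (N : ℕ)
    (hN : N ≤ n) : ContinuousOn (interp p) (Icc (0:ℝ) N) := by
  induction N with
  | zero => rw [Nat.cast_zero, Set.Icc_self]; exact continuousOn_singleton _ _
  | succ N ih =>
    have hNn : N < n := by omega
    have hcell : ContinuousOn (interp p) (Icc (N:ℝ) (N+1)) := by
      refine ContinuousOn.congr ?_ (interp_eqOn_cell p N hNn)
      exact (((continuousOn_const.sub (continuousOn_id.sub continuousOn_const)).smul
        continuousOn_const).add ((continuousOn_id.sub continuousOn_const).smul continuousOn_const))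
    have hih := ih (by omega)
    have hN1 : ((N+1 : ℕ) : ℝ) = (N:ℝ) + 1 := by push_cast; ring
    rw [hN1, ← Set.Icc_union_Icc_eq_Icc (by positivity) (by linarith : (N:ℝ) ≤ N + 1)]
    exact continuousOn_union_closed isClosed_Icc isClosed_Icc hih hcell

lemma interp_continuousOn {d n : ℕ} (p : Fin (n+1) → EuclideanSpace ℝ (Fin d)) :
    ContinuousOn (interp p) (Icc (0:ℝ) n) := interp_continuousOn_aux p n le_rfl


lemma exists_inverse {h : ℝ → ℝ} {c e : ℝ} (hce : c < e)
    (hcont : ContinuousOn h (Icc 0 1)) (hmono : StrictMonoOn h (Icc 0 1))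
    (h0 : h 0 = c) (h1 : h 1 = e) :
    ∃ g : ℝ → ℝ, Continuous g ∧ Monotone g ∧ (∀ x, g x ∈ Icc (0:ℝ) 1) ∧
      (∀ x ∈ Icc c e, h (g x) = x) ∧ (∀ x ≤ c, g x = 0) ∧ (∀ x, e ≤ x → g x = 1) := by
  have h01 : (0:ℝ) ≤ 1 := zero_le_one
  have hmem : ∀ u : Icc (0:ℝ) 1, h u ∈ Icc c e := by
    rintro ⟨u, hu⟩
    constructor
    · rw [← h0]; exact hmono.monotoneOn (left_mem_Icc.2 h01) hu hu.1
    · rw [← h1]; exact hmono.monotoneOn hu (right_mem_Icc.2 h01) hu.2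
  set H : Icc (0:ℝ) 1 → Icc c e := fun u => ⟨h u, hmem u⟩ with hH
  have Hsm : StrictMono H := fun u v huv => by
    exact Subtype.mk_lt_mk.2 (hmono u.2 v.2 (Subtype.coe_lt_coe.2 huv))
  have Hsurj : Function.Surjective H := by
    rintro ⟨x, hx⟩
    have := intermediate_value_Icc h01 hcont
    rw [h0, h1] at this
    obtain ⟨u, hu, hux⟩ := this hx
    exact ⟨⟨u, hu⟩, Subtype.ext hux⟩
  set iso := StrictMono.orderIsoOfSurjective H Hsm Hsurj with hiso
  set g : ℝ → ℝ := fun x => (iso.symm (Set.projIcc c e hce.le x) : ℝ) with hg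
  have hginv : ∀ x ∈ Icc c e, h (g x) = x := by
    intro x hx
    have : H (iso.symm (Set.projIcc c e hce.le x)) = Set.projIcc c e hce.le x := by
      exact StrictMono.orderIsoOfSurjective_self_symm_apply H Hsm Hsurj _
    have h2 := congrArg Subtype.val this
    rw [hg]
    simp only [Set.projIcc_of_mem hce.le hx] at h2 ⊢
    exact h2
  refine ⟨g, ?_, ?_, fun x => (iso.symm _).2, hginv, ?_, ?_⟩
  · exact continuous_subtype_val.comp (iso.symm.continuous.comp continuous_projIcc)
  · intro x y hxy
    exact Subtype.coe_le_coe.2 (iso.symm.monotone (monotone_projIcc hce.le hxy))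
  · intro x hx
    have : Set.projIcc c e hce.le x = ⟨c, left_mem_Icc.2 hce.le⟩ := Set.projIcc_of_le_left _ hx
    rw [hg]
    simp only [this]
    have : h (iso.symm ⟨c, left_mem_Icc.2 hce.le⟩ : ℝ) = c := by
      have h2 := congrArg Subtype.val
        (StrictMono.orderIsoOfSurjective_self_symm_apply H Hsm Hsurj ⟨c, left_mem_Icc.2 hce.le⟩)
      simpa using h2
    have h0' : h (iso.symm ⟨c, left_mem_Icc.2 hce.le⟩ : ℝ) = h 0 := by rw [this, h0]
    exact hmono.injOn (iso.symm _).2 (left_mem_Icc.2 h01) h0'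
  · intro x hx
    have : Set.projIcc c e hce.le x = ⟨e, right_mem_Icc.2 hce.le⟩ := Set.projIcc_of_right_le _ hx
    rw [hg]
    simp only [this]
    have h2 : h (iso.symm ⟨e, right_mem_Icc.2 hce.le⟩ : ℝ) = e := by
      have h2 := congrArg Subtype.val
        (StrictMono.orderIsoOfSurjective_self_symm_apply H Hsm Hsurj ⟨e, right_mem_Icc.2 hce.le⟩)
      simpa using h2
    have h1' : h (iso.symm ⟨e, right_mem_Icc.2 hce.le⟩ : ℝ) = h 1 := by rw [h2, h1]
    exact hmono.injOn (iso.symm _).2 (right_mem_Icc.2 h01) h1'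
section SimpSide

variable {d n k : ℕ}

lemma simp_side (p : Fin (n+1) → EuclideanSpace ℝ (Fin d))
    (ι : Fin (k+1) → Fin (n+1)) (hι : StrictMono ι)
    (hι0 : ι 0 = 0) (hι1 : ι (Fin.last k) = Fin.last n)
    (wp : ℝ → ℝ)
    (hwp0 : ∀ j : Fin (k+1), wp ((j : ℕ) : ℝ) = 0)
    (hwp : ∀ j : Fin k, ∀ s ∈ Set.Ioo ((j : ℕ) : ℝ) (((j : ℕ) : ℝ) + 1),
      wp s ≤ - frechet ((j : ℕ) : ℝ) (((j : ℕ) : ℝ) + 1)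
        (((ι j.castSucc : Fin (n+1)) : ℕ) : ℝ) (((ι j.succ : Fin (n+1)) : ℕ) : ℝ)
        (interp (p ∘ ι)) (interp p))
    {ε : ℝ} (hε : 0 < ε) :
    ∃ F : ℝ → ℝ, Continuous F ∧ Monotone F ∧ F 0 = 0 ∧ F (n:ℝ) = (k:ℝ) ∧
      ∀ x ∈ Set.Icc (0:ℝ) (n:ℝ),
        dist (interp (p ∘ ι) (F x)) (interp p x) + wp (F x) ≤ ε := by
  rcases Nat.eq_zero_or_pos k with hk0 | hkpos
  · subst hk0
    have hn0 : n = 0 := by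
      have h := hι1
      rw [show Fin.last 0 = 0 from rfl, hι0] at h
      have h2 := congrArg Fin.val h
      simpa using h2.symm
    subst hn0
    refine ⟨fun _ => 0, continuous_const, monotone_const, rfl, by simp, ?_⟩
    intro x hx
    have hx0 : x = 0 := le_antisymm (by simpa using hx.2) hx.1
    subst hx0
    have h1 : interp (p ∘ ι) (0:ℝ) = p (ι 0) := by
      have h := interp_natCast (p ∘ ι) 0 (le_refl 0)
      simpa using h
    have h2 : interp p (0:ℝ) = p 0 := by
      have h := interp_natCast p 0 (le_refl 0)
      simpa using h
    have h3 : wp 0 = 0 := by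
      have h := hwp0 0
      simpa using h
    rw [h1, h2, h3, hι0, dist_self]
    linarith
  -- main case
  have hε₁pos : 0 < ε/3 := by linarith
  obtain ⟨δ₁, hδ₁pos, hδ₁⟩ := Metric.uniformContinuousOn_iff.1
    (isCompact_Icc.uniformContinuousOn_of_continuous (interp_continuousOn (p ∘ ι))) (ε/3) hε₁pos
  obtain ⟨δ₂, hδ₂pos, hδ₂⟩ := Metric.uniformContinuousOn_iff.1
    (isCompact_Icc.uniformContinuousOn_of_continuous (interp_continuousOn p)) (ε/3) hε₁pos
  set η := min 1 (min (δ₁/2) (δ₂/(2*((n:ℝ)+1)))) with hηdef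
  have hnpos : (0:ℝ) ≤ n := Nat.cast_nonneg n
  have hηpos : 0 < η := by
    apply lt_min one_pos
    apply lt_min (by linarith)
    positivity
  have hη1 : η ≤ 1 := min_le_left _ _
  have hηδ₁ : η < δ₁ := lt_of_le_of_lt ((min_le_right _ _).trans (min_le_left _ _)) (by linarith)
  have hηδ₂ : η * n < δ₂ := by
    have h1 : η ≤ δ₂/(2*((n:ℝ)+1)) := (min_le_right _ _).trans (min_le_right _ _)
    have h2 : η * n ≤ (δ₂/(2*((n:ℝ)+1))) * n := mul_le_mul_of_nonneg_right h1 hnpos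
    have h3 : (δ₂/(2*((n:ℝ)+1))) * n < δ₂ := by
      rw [div_mul_eq_mul_div, div_lt_iff₀ (by positivity)]
      nlinarith
    linarith
  have H : ∀ j : Fin k, ∃ F : ℝ → ℝ, Continuous F ∧ Monotone F ∧
      (∀ x, F x ∈ Set.Icc ((j:ℕ):ℝ) (((j:ℕ):ℝ)+1)) ∧
      (∀ x, x ≤ (((ι j.castSucc : Fin (n+1)):ℕ):ℝ) → F x = ((j:ℕ):ℝ)) ∧
      (∀ x, (((ι j.succ : Fin (n+1)):ℕ):ℝ) ≤ x → F x = ((j:ℕ):ℝ)+1) ∧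
      (∀ x ∈ Set.Icc (((ι j.castSucc : Fin (n+1)):ℕ):ℝ) (((ι j.succ : Fin (n+1)):ℕ):ℝ),
        dist (interp (p ∘ ι) (F x)) (interp p x) + wp (F x) ≤ ε) := by
    intro j
    have hce : ((ι j.castSucc : Fin (n+1)):ℕ) < ((ι j.succ : Fin (n+1)):ℕ) := by
      have h := hι (Fin.castSucc_lt_succ : j.castSucc < j.succ)
      exact h
    set c : ℕ := ((ι j.castSucc : Fin (n+1)):ℕ) with hcdef
    set e : ℕ := ((ι j.succ : Fin (n+1)):ℕ) with hedef
    have hceR : (c:ℝ) < (e:ℝ) := by exact_mod_cast hce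
    have hen : e ≤ n := Nat.lt_succ_iff.1 (ι j.succ).isLt
    have henR : (e:ℝ) ≤ (n:ℝ) := by exact_mod_cast hen
    have hjk : (j:ℕ) < k := j.isLt
    have hjkR : ((j:ℕ):ℝ) + 1 ≤ (k:ℝ) := by exact_mod_cast hjk
    have hj0 : (0:ℝ) ≤ ((j:ℕ):ℝ) := Nat.cast_nonneg _
    have hc0 : (0:ℝ) ≤ (c:ℝ) := Nat.cast_nonneg _
    have hfj : ContinuousOn (interp (p ∘ ι)) (Set.Icc ((j:ℕ):ℝ) (((j:ℕ):ℝ)+1)) :=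
      (interp_continuousOn (p ∘ ι)).mono (Set.Icc_subset_Icc hj0 hjkR)
    have hgj : ContinuousOn (interp p) (Set.Icc (c:ℝ) (e:ℝ)) :=
      (interp_continuousOn p).mono (Set.Icc_subset_Icc hc0 henR)
    obtain ⟨T, hT⟩ := exists_good_traversal (by linarith : ((j:ℕ):ℝ) ≤ ((j:ℕ):ℝ)+1)
      hceR.le hfj hgj hε₁pos
    set A : ℝ → ℝ := fun t => (1-η) * T.α t + η * (((j:ℕ):ℝ) + t) with hAdef
    set B : ℝ → ℝ := fun t => (1-η) * T.β t + η * ((c:ℝ) + t * ((e:ℝ) - (c:ℝ))) with hBdef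
    have hA0 : A 0 = ((j:ℕ):ℝ) := by rw [hAdef]; simp [T.α0]; ring
    have hA1 : A 1 = ((j:ℕ):ℝ)+1 := by rw [hAdef]; simp [T.α1]; ring
    have hB0 : B 0 = (c:ℝ) := by rw [hBdef]; simp [T.β0]; ring
    have hB1 : B 1 = (e:ℝ) := by rw [hBdef]; simp [T.β1]; ring
    have hAcont : ContinuousOn A (Set.Icc 0 1) :=
      (continuousOn_const.mul T.contα).add
        (continuousOn_const.mul (continuousOn_const.add continuousOn_id))
    have hBcont : ContinuousOn B (Set.Icc 0 1) :=
      (continuousOn_const.mul T.contβ).add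
        (continuousOn_const.mul (continuousOn_const.add (continuousOn_id.mul continuousOn_const)))
    have hAsm : StrictMonoOn A (Set.Icc 0 1) := by
      intro s hs t ht hst
      have h1 := T.monoα hs ht hst.le
      have h2 : (1-η) * T.α s ≤ (1-η) * T.α t := mul_le_mul_of_nonneg_left h1 (by linarith)
      have h3 : η * (((j:ℕ):ℝ) + s) < η * (((j:ℕ):ℝ) + t) := by nlinarith
      simp only [hAdef]
      linarith
    have hBsm : StrictMonoOn B (Set.Icc 0 1) := by
      intro s hs t ht hst
      have h1 := T.monoβ hs ht hst.le
      have h2 : (1-η) * T.β s ≤ (1-η) * T.β t := mul_le_mul_of_nonneg_left h1 (by linarith)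
      have h3 : η * ((c:ℝ) + s * ((e:ℝ)-(c:ℝ))) < η * ((c:ℝ) + t * ((e:ℝ)-(c:ℝ))) := by
        nlinarith [mul_pos hηpos (mul_pos (sub_pos.2 hst) (sub_pos.2 hceR))]
      simp only [hBdef]
      linarith
    have hAmem : ∀ t ∈ Set.Icc (0:ℝ) 1, A t ∈ Set.Icc ((j:ℕ):ℝ) (((j:ℕ):ℝ)+1) := by
      intro t ht
      constructor
      · have h := (hAsm.monotoneOn) (Set.left_mem_Icc.2 zero_le_one) ht ht.1
        rwa [hA0] at h
      · have h := (hAsm.monotoneOn) ht (Set.right_mem_Icc.2 zero_le_one) ht.2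
        rwa [hA1] at h
    have hBmem : ∀ t ∈ Set.Icc (0:ℝ) 1, B t ∈ Set.Icc ((c:ℕ):ℝ) ((e:ℕ):ℝ) := by
      intro t ht
      constructor
      · have h := (hBsm.monotoneOn) (Set.left_mem_Icc.2 zero_le_one) ht ht.1
        rwa [hB0] at h
      · have h := (hBsm.monotoneOn) ht (Set.right_mem_Icc.2 zero_le_one) ht.2
        rwa [hB1] at h
    have hTa : ∀ t ∈ Set.Icc (0:ℝ) 1, T.α t ∈ Set.Icc ((j:ℕ):ℝ) (((j:ℕ):ℝ)+1) :=
      fun t ht => traversal_alpha_mem T (by linarith) ht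
    have hTb : ∀ t ∈ Set.Icc (0:ℝ) 1, T.β t ∈ Set.Icc ((c:ℕ):ℝ) ((e:ℕ):ℝ) :=
      fun t ht => traversal_beta_mem T hceR.le ht
    have key : ∀ t ∈ Set.Icc (0:ℝ) 1,
        dist (interp (p ∘ ι) (A t)) (interp p (B t)) ≤
          frechet ((j:ℕ):ℝ) (((j:ℕ):ℝ)+1) (c:ℝ) (e:ℝ) (interp (p ∘ ι)) (interp p) + ε := by
      intro t ht
      have hat := hTa t ht
      have hbt := hTb t ht
      have hAt := hAmem t ht
      have hmemk : ∀ y ∈ Set.Icc ((j:ℕ):ℝ) (((j:ℕ):ℝ)+1), y ∈ Set.Icc (0:ℝ) (k:ℝ) := by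
        intro y hy
        exact ⟨by linarith [hy.1], by linarith [hy.2]⟩
      have hmemn : ∀ y ∈ Set.Icc (c:ℝ) (e:ℝ), y ∈ Set.Icc (0:ℝ) (n:ℝ) := by
        intro y hy
        exact ⟨by linarith [hy.1], by linarith [hy.2]⟩
      have h1 : dist (interp (p ∘ ι) (A t)) (interp (p ∘ ι) (T.α t)) < ε/3 := by
        apply hδ₁ _ (hmemk _ hAt) _ (hmemk _ hat)
        rw [Real.dist_eq]
        have heq : A t - T.α t = η * ((((j:ℕ):ℝ) + t) - T.α t) := by rw [hAdef]; ring
        rw [heq, abs_mul, abs_of_nonneg hηpos.le]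
        have habs : |(((j:ℕ):ℝ) + t) - T.α t| ≤ 1 := by
          rw [abs_le]
          constructor
          · have h5 := hat.2; have h6 := ht.1; linarith
          · have h5 := hat.1; have h6 := ht.2; linarith
        nlinarith
      have h2 := hT t ht
      have h3 : dist (interp p (B t)) (interp p (T.β t)) < ε/3 := by
        apply hδ₂ _ ?_ _ (hmemn _ hbt)
        · rw [Real.dist_eq]
          have heq : B t - T.β t = η * (((c:ℝ) + t * ((e:ℝ)-(c:ℝ))) - T.β t) := by
            rw [hBdef]; ring
          rw [heq, abs_mul, abs_of_nonneg hηpos.le]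
          have hmm : (c:ℝ) + t * ((e:ℝ)-(c:ℝ)) ∈ Set.Icc (c:ℝ) (e:ℝ) := by
            constructor
            · nlinarith [ht.1, ht.2]
            · nlinarith [ht.1, ht.2]
          have habs : |((c:ℝ) + t * ((e:ℝ)-(c:ℝ))) - T.β t| ≤ (e:ℝ) - (c:ℝ) := by
            rw [abs_le]
            constructor
            · have := hbt.2; have := hmm.1; linarith
            · have := hbt.1; have := hmm.2; linarith
          have : η * |((c:ℝ) + t * ((e:ℝ)-(c:ℝ))) - T.β t| ≤ η * ((e:ℝ)-(c:ℝ)) :=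
            mul_le_mul_of_nonneg_left habs hηpos.le
          have hec : (e:ℝ) - (c:ℝ) ≤ (n:ℝ) := by linarith
          nlinarith
        · exact hmemn _ (hBmem t ht)
      calc dist (interp (p ∘ ι) (A t)) (interp p (B t))
          ≤ dist (interp (p ∘ ι) (A t)) (interp (p ∘ ι) (T.α t))
            + dist (interp (p ∘ ι) (T.α t)) (interp p (T.β t))
            + dist (interp p (T.β t)) (interp p (B t)) := dist_triangle4 _ _ _ _
        _ ≤ frechet ((j:ℕ):ℝ) (((j:ℕ):ℝ)+1) (c:ℝ) (e:ℝ) (interp (p ∘ ι)) (interp p) + ε := by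
            rw [dist_comm (interp p (T.β t)) (interp p (B t))] at *
            linarith
    obtain ⟨G, hGcont, hGmono, hGmem, hGinv, hGleft, hGright⟩ :=
      exists_inverse hceR hBcont hBsm hB0 hB1
    refine ⟨fun x => A (G x), hAcont.comp_continuous hGcont hGmem,
      fun x y hxy => hAsm.monotoneOn (hGmem x) (hGmem y) (hGmono hxy),
      fun x => hAmem _ (hGmem x), ?_, ?_, ?_⟩
    · intro x hx
      show A (G x) = ((j:ℕ):ℝ)
      rw [hGleft x hx, hA0]
    · intro x hx
      show A (G x) = ((j:ℕ):ℝ)+1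
      rw [hGright x hx, hA1]
    · intro x hx
      show dist (interp (p ∘ ι) (A (G x))) (interp p x) + wp (A (G x)) ≤ ε
      have hu : G x ∈ Set.Icc (0:ℝ) 1 := hGmem x
      have hBu : B (G x) = x := hGinv x hx
      have hmem := hAmem (G x) hu
      rcases eq_or_lt_of_le hmem.1 with hlo | hlo
      · -- A (G x) = j, so G x = 0, x = c
        have hu0 : G x = 0 := by
          by_contra hne
          have hpos : 0 < G x := lt_of_le_of_ne hu.1 (Ne.symm hne)
          have h := hAsm (Set.left_mem_Icc.2 zero_le_one) hu hpos
          rw [hA0, ← hlo] at h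
          exact lt_irrefl _ h
        have hxc : x = (c:ℝ) := by rw [← hBu, hu0, hB0]
        rw [← hlo, hxc]
        have hjn : (j:ℕ) ≤ k := hjk.le
        have e1 : interp (p ∘ ι) ((j:ℕ):ℝ) = p (ι j.castSucc) := by
          rw [interp_natCast (p ∘ ι) (j:ℕ) hjn]
          exact congrArg (fun i => p (ι i)) (Fin.ext (by simp))
        have e2 : interp p ((c:ℝ)) = p (ι j.castSucc) := by
          rw [hcdef]
          rw [interp_natCast p _ (Nat.lt_succ_iff.1 (ι j.castSucc).isLt)]
        rw [e1, e2, dist_self]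
        have e3 : wp ((j:ℕ):ℝ) = 0 := by
          have h := hwp0 j.castSucc
          simpa using h
        rw [e3]
        linarith
      · rcases eq_or_lt_of_le hmem.2 with hhi | hhi
        · -- A (G x) = j + 1, so G x = 1, x = e
          have hu1 : G x = 1 := by
            by_contra hne
            have hlt : G x < 1 := lt_of_le_of_ne hu.2 hne
            have h := hAsm hu (Set.right_mem_Icc.2 zero_le_one) hlt
            rw [hA1, hhi] at h
            exact lt_irrefl _ h
          have hxe : x = (e:ℝ) := by rw [← hBu, hu1, hB1]
          rw [hhi, hxe]
          have e1 : interp (p ∘ ι) (((j:ℕ):ℝ)+1) = p (ι j.succ) := by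
            have hcast : ((j:ℕ):ℝ)+1 = (((j:ℕ)+1 : ℕ):ℝ) := by push_cast; ring
            rw [hcast, interp_natCast (p ∘ ι) ((j:ℕ)+1) hjk]
            exact congrArg (fun i => p (ι i)) (Fin.ext (by simp))
          have e2 : interp p ((e:ℝ)) = p (ι j.succ) := by
            rw [hedef]
            rw [interp_natCast p _ (Nat.lt_succ_iff.1 (ι j.succ).isLt)]
          rw [e1, e2, dist_self]
          have e3 : wp (((j:ℕ):ℝ)+1) = 0 := by
            have h := hwp0 j.succ
            have hcast : ((j.succ : Fin (k+1)) : ℕ) = (j:ℕ)+1 := by simp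
            rw [hcast] at h
            push_cast at h ⊢
            convert h using 2
          rw [e3]
          linarith
        · -- interior
          have hwpb := hwp j (A (G x)) ⟨hlo, hhi⟩
          have hkey := key (G x) hu
          rw [hBu] at hkey
          rw [← hcdef, ← hedef] at hwpb
          linarith
  choose Fj hFc hFm hFmem hFleft hFright hFb using H
  set F : ℝ → ℝ := fun x => ∑ j : Fin k, (Fj j x - ((j:ℕ):ℝ)) with hFdef
  have hcell : ∀ (i : Fin k) (x : ℝ),
      (((ι i.castSucc : Fin (n+1)):ℕ):ℝ) ≤ x → x ≤ (((ι i.succ : Fin (n+1)):ℕ):ℝ) →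
      F x = Fj i x := by
    intro i x hxc hxe
    have hterm : ∀ j : Fin k, Fj j x - ((j:ℕ):ℝ) =
        (if (j:ℕ) < (i:ℕ) then (1:ℝ) else 0) +
        (if j = i then Fj i x - ((i:ℕ):ℝ) else 0) := by
      intro j
      rcases lt_trichotomy ((j:ℕ)) ((i:ℕ)) with hji | hji | hji
      · have hle : ((ι j.succ : Fin (n+1)):ℕ) ≤ ((ι i.castSucc : Fin (n+1)):ℕ) := by
          have hle' : j.succ ≤ i.castSucc := by
            rw [Fin.le_def]
            simp
            omega
          exact hι.monotone hle'
        have hlex : (((ι j.succ : Fin (n+1)):ℕ):ℝ) ≤ x :=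
          le_trans (by exact_mod_cast hle) hxc
        rw [hFright j x hlex]
        have hne : j ≠ i := by
          intro hcon; rw [hcon] at hji; exact lt_irrefl _ hji
        rw [if_pos hji, if_neg hne]
        ring
      · have hj : j = i := Fin.ext hji
        subst hj
        rw [if_neg (lt_irrefl _), if_pos rfl]
        ring
      · have hle : ((ι i.succ : Fin (n+1)):ℕ) ≤ ((ι j.castSucc : Fin (n+1)):ℕ) := by
          have hle' : i.succ ≤ j.castSucc := by
            rw [Fin.le_def]
            simp
            omega
          exact hι.monotone hle'
        have hlex : x ≤ (((ι j.castSucc : Fin (n+1)):ℕ):ℝ) :=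
          le_trans hxe (by exact_mod_cast hle)
        rw [hFleft j x hlex]
        have hne : j ≠ i := by
          intro hcon; rw [hcon] at hji; exact lt_irrefl _ hji
        rw [if_neg (by omega : ¬ ((j:ℕ) < (i:ℕ))), if_neg hne]
        ring
    rw [hFdef]
    simp only []
    rw [Finset.sum_congr rfl (fun j _ => hterm j), Finset.sum_add_distrib]
    rw [Finset.sum_ite_eq' Finset.univ i (fun _ => Fj i x - ((i:ℕ):ℝ))]
    rw [if_pos (Finset.mem_univ i)]
    have hsum1 : (∑ j : Fin k, if (j:ℕ) < (i:ℕ) then (1:ℝ) else 0) = ((i:ℕ):ℝ) := by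
      rw [Fin.sum_univ_eq_sum_range (fun j => if j < (i:ℕ) then (1:ℝ) else 0) k]
      rw [← Finset.sum_filter]
      have hfilt : (Finset.range k).filter (fun j => j < (i:ℕ)) = Finset.range (i:ℕ) := by
        ext a
        simp only [Finset.mem_filter, Finset.mem_range]
        constructor
        · rintro ⟨_, h⟩; exact h
        · intro h; exact ⟨lt_trans h i.isLt, h⟩
      rw [hfilt, Finset.sum_const, Finset.card_range, nsmul_eq_mul, mul_one]
    rw [hsum1]
    ring
  have hcover : ∀ x ∈ Set.Icc (0:ℝ) (n:ℝ), ∃ i : Fin k,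
      (((ι i.castSucc : Fin (n+1)):ℕ):ℝ) ≤ x ∧ x ≤ (((ι i.succ : Fin (n+1)):ℕ):ℝ) := by
    intro x hx
    set s := Finset.univ.filter
      (fun i : Fin k => (((ι i.castSucc : Fin (n+1)):ℕ):ℝ) ≤ x) with hsdef
    have hne : s.Nonempty := by
      refine ⟨⟨0, hkpos⟩, Finset.mem_filter.2 ⟨Finset.mem_univ _, ?_⟩⟩
      have h0 : (⟨0, hkpos⟩ : Fin k).castSucc = (0 : Fin (k+1)) := rfl
      rw [h0, hι0]
      simpa using hx.1
    set i := s.max' hne with hidef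
    have hic : (((ι i.castSucc : Fin (n+1)):ℕ):ℝ) ≤ x := by
      exact (Finset.mem_filter.1 (s.max'_mem hne)).2
    refine ⟨i, hic, ?_⟩
    by_contra hcon
    push_neg at hcon
    by_cases hlast : (i:ℕ) + 1 = k
    · have hsl : i.succ = Fin.last k := Fin.ext (by simp [hlast])
      rw [hsl, hι1] at hcon
      have hln : ((Fin.last n : Fin (n+1)):ℕ) = n := rfl
      rw [hln] at hcon
      linarith [hx.2]
    · have hik : (i:ℕ) + 1 < k := lt_of_le_of_ne i.isLt hlast
      set i' : Fin k := ⟨(i:ℕ)+1, hik⟩ with hi'def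
      have hmemi' : i' ∈ s := by
        refine Finset.mem_filter.2 ⟨Finset.mem_univ _, ?_⟩
        have hcs : i'.castSucc = i.succ := Fin.ext rfl
        rw [hcs]
        exact hcon.le
      have hle := s.le_max' i' hmemi'
      rw [← hidef] at hle
      have : (i:ℕ) + 1 ≤ (i:ℕ) := hle
      omega
  refine ⟨F, ?_, ?_, ?_, ?_, ?_⟩
  · exact continuous_finset_sum _ (fun j _ => (hFc j).sub continuous_const)
  · intro a b hab
    exact Finset.sum_le_sum (fun j _ => sub_le_sub_right (hFm j hab) _)
  · rw [hFdef]
    simp only []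
    apply Finset.sum_eq_zero
    intro j _
    rw [hFleft j 0 (Nat.cast_nonneg _), sub_self]
  · rw [hFdef]
    simp only []
    have hterm : ∀ j : Fin k, Fj j (n:ℝ) - ((j:ℕ):ℝ) = 1 := by
      intro j
      have hen : ((ι j.succ : Fin (n+1)):ℕ) ≤ n := Nat.lt_succ_iff.1 (ι j.succ).isLt
      rw [hFright j (n:ℝ) (by exact_mod_cast hen)]
      ring
    rw [Finset.sum_congr rfl (fun j _ => hterm j), Finset.sum_const, Finset.card_univ,
      Fintype.card_fin, nsmul_eq_mul, mul_one]
  · intro x hx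
    obtain ⟨i, h1, h2⟩ := hcover x hx
    rw [hcell i x h1 h2]
    exact hFb i x ⟨h1, h2⟩

end SimpSide


/-- weighted lower bound for lossless simplification.  If `p ∘ ι`
and `q ∘ κ` are vertex-restricted simplifications of `p` and `q`, and the
non-positive edge weights dominate (in absolute value) the Fréchet distance of
each simplification edge to its corresponding subcurve, then the additively
weighted Fréchet distance of the simplifications is a lower bound on the
Fréchet distance of the original curves. -/
theorem weighted_frechet_lower_bound {d n m k l : ℕ}
    (p : Fin (n+1) → EuclideanSpace ℝ (Fin d))
    (q : Fin (m+1) → EuclideanSpace ℝ (Fin d))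
    (ι : Fin (k+1) → Fin (n+1)) (κ : Fin (l+1) → Fin (m+1))
    (hι : StrictMono ι) (hκ : StrictMono κ)
    (hι0 : ι 0 = 0) (hι1 : ι (Fin.last k) = Fin.last n)
    (hκ0 : κ 0 = 0) (hκ1 : κ (Fin.last l) = Fin.last m)
    (wp wq : ℝ → ℝ)
    (hwpneg : ∀ s, wp s ≤ 0) (hwqneg : ∀ s, wq s ≤ 0)
    (hwp0 : ∀ j : Fin (k+1), wp ((j : ℕ) : ℝ) = 0)
    (hwq0 : ∀ j : Fin (l+1), wq ((j : ℕ) : ℝ) = 0)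
    (hwp : ∀ j : Fin k, ∀ s ∈ Set.Ioo ((j : ℕ) : ℝ) (((j : ℕ) : ℝ) + 1),
      wp s ≤ - frechet ((j : ℕ) : ℝ) (((j : ℕ) : ℝ) + 1)
        (((ι j.castSucc : Fin (n+1)) : ℕ) : ℝ) (((ι j.succ : Fin (n+1)) : ℕ) : ℝ)
        (interp (p ∘ ι)) (interp p))
    (hwq : ∀ j : Fin l, ∀ s ∈ Set.Ioo ((j : ℕ) : ℝ) (((j : ℕ) : ℝ) + 1),
      wq s ≤ - frechet ((j : ℕ) : ℝ) (((j : ℕ) : ℝ) + 1)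
        (((κ j.castSucc : Fin (m+1)) : ℕ) : ℝ) (((κ j.succ : Fin (m+1)) : ℕ) : ℝ)
        (interp (q ∘ κ)) (interp q)) :
    frechetW 0 (k : ℝ) 0 (l : ℝ) (interp (p ∘ ι)) (interp (q ∘ κ)) wp wq ≤
      frechet 0 (n : ℝ) 0 (m : ℝ) (interp p) (interp q) := by

  have hfp := interp_continuousOn p
  have hfq := interp_continuousOn q
  have hne : {r | ∃ T : Traversal 0 (n:ℝ) 0 (m:ℝ), ∀ t ∈ Set.Icc (0:ℝ) 1,
      dist (interp p (T.α t)) (interp q (T.β t)) ≤ r}.Nonempty :=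
    frechet_set_nonempty (Nat.cast_nonneg n) (Nat.cast_nonneg m) hfp hfq
  rw [frechet]
  apply le_csInf hne
  rintro r ⟨T, hT⟩
  rw [frechetW]
  apply le_of_forall_pos_le_add
  intro δ hδ
  have hδ2 : 0 < δ/2 := by linarith
  obtain ⟨F, hFc, hFm, hF0, hFn, hFb⟩ := simp_side p ι hι hι0 hι1 wp hwp0 hwp hδ2
  obtain ⟨G, hGc, hGm, hG0, hGn, hGb⟩ := simp_side q κ hκ hκ0 hκ1 wq hwq0 hwq hδ2
  have hmem : r + δ ∈ {y | ∃ T' : Traversal 0 (k:ℝ) 0 (l:ℝ), ∀ t ∈ Set.Icc (0:ℝ) 1,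
      dist (interp (p ∘ ι) (T'.α t)) (interp (q ∘ κ) (T'.β t))
        + wp (T'.α t) + wq (T'.β t) ≤ y} := by
    refine ⟨⟨fun t => F (T.α t), fun t => G (T.β t),
      hFc.comp_continuousOn T.contα,
      fun s hs t ht hst => hFm (T.monoα hs ht hst),
      by show F (T.α 0) = 0; rw [T.α0, hF0],
      by show F (T.α 1) = (k:ℝ); rw [T.α1, hFn],
      hGc.comp_continuousOn T.contβ,
      fun s hs t ht hst => hGm (T.monoβ hs ht hst),
      by show G (T.β 0) = 0; rw [T.β0, hG0],
      by show G (T.β 1) = (l:ℝ); rw [T.β1, hGn]⟩, ?_⟩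
    intro t ht
    show dist (interp (p ∘ ι) (F (T.α t))) (interp (q ∘ κ) (G (T.β t)))
      + wp (F (T.α t)) + wq (G (T.β t)) ≤ r + δ
    have hα := traversal_alpha_mem T (Nat.cast_nonneg n) ht
    have hβ := traversal_beta_mem T (Nat.cast_nonneg m) ht
    have h1 := hFb (T.α t) hα
    have h2 := hGb (T.β t) hβ
    have h3 := hT t ht
    have h4 := dist_triangle4 (interp (p ∘ ι) (F (T.α t))) (interp p (T.α t))
      (interp q (T.β t)) (interp (q ∘ κ) (G (T.β t)))
    rw [dist_comm (interp q (T.β t)) (interp (q ∘ κ) (G (T.β t)))] at h4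
    linarith
  have hbdd : BddBelow {y | ∃ T' : Traversal 0 (k:ℝ) 0 (l:ℝ), ∀ t ∈ Set.Icc (0:ℝ) 1,
      dist (interp (p ∘ ι) (T'.α t)) (interp (q ∘ κ) (T'.β t))
        + wp (T'.α t) + wq (T'.β t) ≤ y} := by
    refine ⟨0, ?_⟩
    rintro y ⟨T', hT'⟩
    have h := hT' 0 (Set.left_mem_Icc.2 zero_le_one)
    rw [T'.α0, T'.β0] at h
    have hwp00 : wp 0 = 0 := by have h0 := hwp0 0; simpa using h0
    have hwq00 : wq 0 = 0 := by have h0 := hwq0 0; simpa using h0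
    rw [hwp00, hwq00] at h
    have hd := dist_nonneg (x := interp (p ∘ ι) (0:ℝ)) (y := interp (q ∘ κ) (0:ℝ))
    linarith
  exact csInf_le hbdd hmem
end
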